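/- (Linearization at full synchrony, nonlinear coupling α(r) = β₁ + β₂r².) Let N ≥ 2 and β₁, β₂ ∈ ℝ. Define r²(φ) = (1/N²)[(1 + ∑_{j=1}^{N−1} cos φ_j)² + (∑_{j=1}^{N−1} sin φ_j)²] and A(φ) = β₁ + β₂ r²(φ), and define F : ℝ^{N−1} → ℝ^{N−1} by F_i(φ) = −(1/N)[ ∑_{j=1, j≠i}^{N−1} sin(φ_i − φ_j + A(φ)) + sin(φ_i + A(φ)) + ∑_{j=1}^{N−1} sin(φ_j − A(φ)) ]. Then the Fréchet derivative of F at φ = 0 equals −cos(β₁ + β₂) times the identity operator on ℝ^{N−1}. In particular, the fully synchronous state (where r = 1, so A = β₁ + β₂) is linearly stable when cos(β₁ + β₂) > 0 and loses stability on the lines β₁ + β₂ = π/2 + πm, m ∈ ℤ. -/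

import Mathlib

open Real Finset

/-- Linearization at full synchrony for the nonlinear coupling
`α(r) = β₁ + β₂ r²`: with `r²(φ)` and `A(φ) = β₁ + β₂ r²(φ)` expressed in the
phase-difference variables, the Fréchet derivative of the vector field `F` at
`φ = 0` equals `-cos(β₁ + β₂)` times the identity. -/
theorem stmt_11 (N : ℕ) (hN : 2 ≤ N) (β₁ β₂ : ℝ)
    (r2 : (Fin (N - 1) → ℝ) → ℝ)
    (hr2 : ∀ φ : Fin (N - 1) → ℝ,
      r2 φ = (1 / (N : ℝ) ^ 2) *
        ((1 + ∑ j, Real.cos (φ j)) ^ 2 + (∑ j, Real.sin (φ j)) ^ 2))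
    (A : (Fin (N - 1) → ℝ) → ℝ)
    (hA : ∀ φ : Fin (N - 1) → ℝ, A φ = β₁ + β₂ * r2 φ)
    (F : (Fin (N - 1) → ℝ) → (Fin (N - 1) → ℝ))
    (hF : ∀ φ : Fin (N - 1) → ℝ, ∀ i : Fin (N - 1),
      F φ i = -(1 / (N : ℝ)) *
        ((∑ j ∈ Finset.univ.filter (fun j => j ≠ i),
            Real.sin (φ i - φ j + A φ))
          + Real.sin (φ i + A φ)
          + ∑ j, Real.sin (φ j - A φ))) :
    fderiv ℝ F 0
      = (-Real.cos (β₁ + β₂)) • ContinuousLinearMap.id ℝ (Fin (N - 1) → ℝ) := by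
  set c := β₁ + β₂ with hc
  have h1N : 1 ≤ N := le_trans one_le_two hN
  have hNR : (N : ℝ) ≠ 0 := Nat.cast_ne_zero.mpr (by omega)
  have hcast : ((N - 1 : ℕ) : ℝ) = (N : ℝ) - 1 := by
    push_cast [h1N]; ring
  have hcast2 : ((N - 1 - 1 : ℕ) : ℝ) = (N : ℝ) - 2 := by
    have : N - 1 - 1 = N - 2 := by omega
    rw [this]; push_cast [hN]; ring
  -- projections
  have hproj : ∀ j : Fin (N - 1),
      HasFDerivAt (fun φ : Fin (N - 1) → ℝ => φ j)
        (ContinuousLinearMap.proj j : (Fin (N - 1) → ℝ) →L[ℝ] ℝ) 0 :=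
    fun j => hasFDerivAt_apply (𝕜 := ℝ) j 0
  -- value of r2 and A at 0
  have hr20 : r2 0 = 1 := by
    rw [hr2]
    simp only [Pi.zero_apply, Real.cos_zero, Real.sin_zero, Finset.sum_const,
      Finset.card_univ, Fintype.card_fin, nsmul_eq_mul, mul_one, mul_zero]
    rw [hcast]
    field_simp
    ring
  have hA0 : A 0 = c := by rw [hA, hr20]; ring
  -- derivative of r2 at 0 is zero
  have hcos0 : ∀ j : Fin (N - 1),
      HasFDerivAt (fun φ : Fin (N - 1) → ℝ => Real.cos (φ j))
        (0 : (Fin (N - 1) → ℝ) →L[ℝ] ℝ) 0 := by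
    intro j
    have h := (Real.hasDerivAt_cos ((0 : Fin (N - 1) → ℝ) j)).comp_hasFDerivAt
      (0 : Fin (N - 1) → ℝ) (hproj j)
    simpa [Function.comp_def] using h
  have hsin0 : ∀ j : Fin (N - 1),
      HasFDerivAt (fun φ : Fin (N - 1) → ℝ => Real.sin (φ j))
        (ContinuousLinearMap.proj j : (Fin (N - 1) → ℝ) →L[ℝ] ℝ) 0 := by
    intro j
    have h := (Real.hasDerivAt_sin ((0 : Fin (N - 1) → ℝ) j)).comp_hasFDerivAt
      (0 : Fin (N - 1) → ℝ) (hproj j)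
    simpa [Function.comp_def] using h
  have hC : HasFDerivAt (fun φ : Fin (N - 1) → ℝ => 1 + ∑ j, Real.cos (φ j))
      (0 : (Fin (N - 1) → ℝ) →L[ℝ] ℝ) 0 := by
    have := (HasFDerivAt.fun_sum (fun j (_ : j ∈ Finset.univ) => hcos0 j)).const_add (1 : ℝ)
    simpa using this
  have hS : HasFDerivAt (fun φ : Fin (N - 1) → ℝ => ∑ j, Real.sin (φ j))
      (∑ j, (ContinuousLinearMap.proj j : (Fin (N - 1) → ℝ) →L[ℝ] ℝ)) 0 :=
    HasFDerivAt.fun_sum (fun j _ => hsin0 j)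
  have hC2 : HasFDerivAt (fun φ : Fin (N - 1) → ℝ => (1 + ∑ j, Real.cos (φ j)) ^ 2)
      (0 : (Fin (N - 1) → ℝ) →L[ℝ] ℝ) 0 := by
    simpa [sq] using hC.fun_mul hC
  have hS2 : HasFDerivAt (fun φ : Fin (N - 1) → ℝ => (∑ j, Real.sin (φ j)) ^ 2)
      (0 : (Fin (N - 1) → ℝ) →L[ℝ] ℝ) 0 := by
    simpa [sq] using hS.fun_mul hS
  have hr2' : HasFDerivAt r2 (0 : (Fin (N - 1) → ℝ) →L[ℝ] ℝ) 0 := by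
    have hre : r2 = fun φ => (1 / (N : ℝ) ^ 2) *
        ((1 + ∑ j, Real.cos (φ j)) ^ 2 + (∑ j, Real.sin (φ j)) ^ 2) := funext hr2
    rw [hre]
    have h := (hC2.fun_add hS2).const_mul (1 / (N : ℝ) ^ 2)
    convert h using 1
    · rfl
    · rfl
    · rfl
    · rfl
    · rfl
    simp
  have hDA : HasFDerivAt A (0 : (Fin (N - 1) → ℝ) →L[ℝ] ℝ) 0 := by
    have hAe : A = fun φ => β₁ + β₂ * r2 φ := funext hA
    rw [hAe]
    simpa using (hr2'.const_mul β₂).const_add β₁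
  -- the main derivative
  have key : HasFDerivAt F
      ((-Real.cos c) • ContinuousLinearMap.id ℝ (Fin (N - 1) → ℝ)) 0 := by
    apply hasFDerivAt_pi''
    intro i
    have h2 : HasFDerivAt (fun φ : Fin (N - 1) → ℝ => Real.sin (φ i + A φ))
        (Real.cos c • (ContinuousLinearMap.proj i : (Fin (N - 1) → ℝ) →L[ℝ] ℝ)) 0 := by
      have hg : HasFDerivAt (fun φ : Fin (N - 1) → ℝ => φ i + A φ)
          (ContinuousLinearMap.proj i : (Fin (N - 1) → ℝ) →L[ℝ] ℝ) 0 := by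
        simpa using (hproj i).fun_add hDA
      have := (Real.hasDerivAt_sin c).comp_hasFDerivAt_of_eq 0 hg (by simp [hA0])
      simpa [Function.comp_def] using this
    have h1j : ∀ j : Fin (N - 1),
        HasFDerivAt (fun φ : Fin (N - 1) → ℝ => Real.sin (φ i - φ j + A φ))
          (Real.cos c • ((ContinuousLinearMap.proj i : (Fin (N - 1) → ℝ) →L[ℝ] ℝ)
            - ContinuousLinearMap.proj j)) 0 := by
      intro j
      have hg : HasFDerivAt (fun φ : Fin (N - 1) → ℝ => φ i - φ j + A φ)
          ((ContinuousLinearMap.proj i : (Fin (N - 1) → ℝ) →L[ℝ] ℝ)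
            - ContinuousLinearMap.proj j) 0 := by
        simpa using ((hproj i).fun_sub (hproj j)).fun_add hDA
      have := (Real.hasDerivAt_sin c).comp_hasFDerivAt_of_eq 0 hg (by simp [hA0])
      simpa [Function.comp_def] using this
    have h3j : ∀ j : Fin (N - 1),
        HasFDerivAt (fun φ : Fin (N - 1) → ℝ => Real.sin (φ j - A φ))
          (Real.cos c • (ContinuousLinearMap.proj j : (Fin (N - 1) → ℝ) →L[ℝ] ℝ)) 0 := by
      intro j
      have hg : HasFDerivAt (fun φ : Fin (N - 1) → ℝ => φ j - A φ)
          (ContinuousLinearMap.proj j : (Fin (N - 1) → ℝ) →L[ℝ] ℝ) 0 := by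
        simpa using (hproj j).fun_sub hDA
      have := (Real.hasDerivAt_sin (-c)).comp_hasFDerivAt_of_eq 0 hg (by simp [hA0])
      simpa [Function.comp_def, Real.cos_neg] using this
    have h1 : HasFDerivAt (fun φ : Fin (N - 1) → ℝ =>
        ∑ j ∈ Finset.univ.filter (fun j => j ≠ i), Real.sin (φ i - φ j + A φ))
        (∑ j ∈ Finset.univ.filter (fun j => j ≠ i),
          Real.cos c • ((ContinuousLinearMap.proj i : (Fin (N - 1) → ℝ) →L[ℝ] ℝ)
            - ContinuousLinearMap.proj j)) 0 :=
      HasFDerivAt.fun_sum (fun j _ => h1j j)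
    have h3 : HasFDerivAt (fun φ : Fin (N - 1) → ℝ => ∑ j, Real.sin (φ j - A φ))
        (∑ j, Real.cos c • (ContinuousLinearMap.proj j : (Fin (N - 1) → ℝ) →L[ℝ] ℝ)) 0 :=
      HasFDerivAt.fun_sum (fun j _ => h3j j)
    have htot := ((h1.fun_add h2).fun_add h3).const_mul (-(1 / (N : ℝ)))
    have hfun : (fun φ => F φ i) = (fun φ : Fin (N - 1) → ℝ => -(1 / (N : ℝ)) *
        ((∑ j ∈ Finset.univ.filter (fun j => j ≠ i), Real.sin (φ i - φ j + A φ))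
          + Real.sin (φ i + A φ) + ∑ j, Real.sin (φ j - A φ))) :=
      funext fun φ => hF φ i
    rw [hfun]
    convert htot using 1
    · rfl
    apply ContinuousLinearMap.ext
    intro v
    simp only [ContinuousLinearMap.coe_comp', Function.comp_apply,
      ContinuousLinearMap.smul_apply, ContinuousLinearMap.coe_id', id_eq,
      ContinuousLinearMap.proj_apply, Pi.smul_apply, smul_eq_mul,
      ContinuousLinearMap.add_apply, ContinuousLinearMap.sum_apply,
      ContinuousLinearMap.sub_apply]
    have hSsum : ∑ j ∈ Finset.univ.filter (fun j => j ≠ i), (v i - v j)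
        = ((N : ℝ) - 1) * v i - ∑ j, v j := by
      rw [Finset.sum_sub_distrib, Finset.sum_const, Finset.filter_ne',
        Finset.sum_erase_eq_sub (Finset.mem_univ i),
        Finset.card_erase_of_mem (Finset.mem_univ i)]
      simp only [Finset.card_univ, Fintype.card_fin, nsmul_eq_mul, hcast2]
      ring
    calc -Real.cos c * v i
        = -(1 / (N : ℝ)) * (Real.cos c * (((N : ℝ) - 1) * v i - ∑ j, v j)
            + Real.cos c * v i + Real.cos c * ∑ j, v j) := by
          field_simp
          ring
      _ = -(1 / (N : ℝ)) * ((∑ j ∈ Finset.univ.filter (fun j => j ≠ i),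
            Real.cos c * (v i - v j)) + Real.cos c * v i
            + ∑ j, Real.cos c * v j) := by
          rw [← Finset.mul_sum, ← Finset.mul_sum, hSsum]
  exact key.fderiv.trans rfl
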